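/- arXiv:2402.06030 — 2 statements merged into one kernel-verified Lean document; each statement's English description precedes it below -/
import Mathlib

section
/- The Shapley value satisfies efficiency: Σ_{i ∈ N} φᵢ(U) = U(N) - U(∅), where φᵢ(U) = Σ_{S ⊆ N∖{i}} (|S|!(n-|S|-1)!/n!)(U(S∪{i}) - U(S)). -/
open Finset

/-- The Shapley value of player `i`:
`φᵢ(U) = Σ_{S ⊆ N∖{i}} (|S|!(n-|S|-1)!/n!)(U(S∪{i}) - U(S))`. -/
noncomputable def shapley {α : Type*} [Fintype α] [DecidableEq α]
    (U : Finset α → ℝ) (i : α) : ℝ :=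
  ∑ S ∈ (Finset.univ.erase i).powerset,
    ((S.card.factorial * (Fintype.card α - S.card - 1).factorial : ℝ) /
      (Fintype.card α).factorial) * (U (insert i S) - U S)

/-- Efficiency of the Shapley value: `Σ_{i ∈ N} φᵢ(U) = U(N) - U(∅)`. -/
theorem shapley_efficiency {α : Type*} [Fintype α] [DecidableEq α]
    (U : Finset α → ℝ) :
    ∑ i, shapley U i = U Finset.univ - U ∅ := by
  classical
  rcases Nat.eq_zero_or_pos (Fintype.card α) with h0 | hpos
  · have : IsEmpty α := Fintype.card_eq_zero_iff.mp h0
    simp [Finset.univ_eq_empty]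
  set n := Fintype.card α with hn
  set w : ℕ → ℝ := fun k => (k.factorial * (n - k - 1).factorial : ℝ) / n.factorial with hw
  have h1 : ∀ i : α, shapley U i
      = ∑ S ∈ univ.powerset.filter (fun S => i ∉ S), w S.card * (U (insert i S) - U S) := by
    intro i
    rw [shapley]
    apply Finset.sum_congr
    · ext S
      simp [Finset.subset_erase]
    · intros; rfl
  simp only [h1]
  have h2 : ∀ i : α, ∑ S ∈ univ.powerset.filter (fun S => i ∉ S),
      w S.card * (U (insert i S) - U S)
      = ∑ S ∈ univ.powerset, if i ∉ S then w S.card * (U (insert i S) - U S) else 0 :=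
    fun i => (Finset.sum_filter _ _)
  simp only [h2]
  rw [Finset.sum_comm]
  have h3 : ∀ S : Finset α, (∑ i : α, if i ∉ S then w S.card * (U (insert i S) - U S) else 0)
      = (∑ i ∈ Sᶜ, w S.card * U (insert i S)) - (Sᶜ.card : ℝ) * (w S.card * U S) := by
    intro S
    rw [← Finset.sum_filter]
    have : (univ.filter (fun i => i ∉ S)) = Sᶜ := by ext i; simp
    rw [this]
    simp only [mul_sub, Finset.sum_sub_distrib, Finset.sum_const, nsmul_eq_mul]
  simp only [h3]
  rw [Finset.sum_sub_distrib]
  -- Reindex the first sum by T = insert i S.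
  have hA : (∑ S ∈ univ.powerset, ∑ i ∈ Sᶜ, w S.card * U (insert i S))
      = ∑ T ∈ univ.powerset, (T.card : ℝ) * (w (T.card - 1) * U T) := by
    have : ∀ T : Finset α, (T.card : ℝ) * (w (T.card - 1) * U T)
        = ∑ i ∈ T, w (T.card - 1) * U T := by
      intro T
      rw [Finset.sum_const, nsmul_eq_mul]
    simp only [this]
    rw [Finset.sum_sigma', Finset.sum_sigma']
    apply Finset.sum_bij' (fun p _ => (⟨insert p.2 p.1, p.2⟩ : Σ _ : Finset α, α))
      (fun p _ => (⟨p.1.erase p.2, p.2⟩ : Σ _ : Finset α, α))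
    · intro p hp
      simp only [Finset.mem_sigma, Finset.mem_powerset, Finset.mem_compl] at hp ⊢
      exact ⟨Finset.insert_subset_iff.mpr ⟨Finset.mem_univ _, hp.1⟩, Finset.mem_insert_self _ _⟩
    · intro p hp
      simp only [Finset.mem_sigma, Finset.mem_powerset, Finset.mem_compl] at hp ⊢
      exact ⟨(Finset.erase_subset _ _).trans hp.1, Finset.notMem_erase _ _⟩
    · intro p hp
      simp only [Finset.mem_sigma, Finset.mem_powerset, Finset.mem_compl] at hp
      simp [Finset.erase_insert hp.2]
    · intro p hp
      simp only [Finset.mem_sigma, Finset.mem_powerset] at hp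
      simp [Finset.insert_erase hp.2]
    · intro p hp
      simp only [Finset.mem_sigma, Finset.mem_powerset, Finset.mem_compl] at hp
      rw [Finset.card_insert_of_notMem hp.2]
      simp
  rw [hA]
  rw [← Finset.sum_sub_distrib]
  -- Now the coefficient of U T vanishes unless T = ∅ or T = univ.
  have hne : (∅ : Finset α) ≠ univ := by
    intro h
    have := Finset.card_univ (α := α)
    rw [← h] at this
    simp [hn] at this
    omega
  have hsub : ({∅, univ} : Finset (Finset α)) ⊆ univ.powerset := by
    intro T hT
    simp only [Finset.mem_insert, Finset.mem_singleton] at hT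
    rcases hT with rfl | rfl <;> simp
  rw [← Finset.sum_subset hsub]
  · rw [Finset.sum_pair hne]
    have hcards : (univ : Finset α).card = n := Finset.card_univ
    have hcomplempty : ((∅ : Finset α)ᶜ).card = n := by simp [hcards]
    have hcompluniv : ((univ : Finset α)ᶜ).card = 0 := by simp
    have hmf : ((n : ℝ) * (n - 1).factorial) = n.factorial := by
      exact_mod_cast Nat.mul_factorial_pred hpos.ne'
    have key1 : (n : ℝ) * w 0 = 1 := by
      have hw0 : w 0 = ((n - 1).factorial : ℝ) / n.factorial := by simp [hw]
      rw [hw0, ← mul_div_assoc,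
        div_eq_one_iff_eq (Nat.cast_ne_zero.mpr n.factorial_ne_zero), hmf]
    have key2 : (n : ℝ) * w (n - 1) = 1 := by
      have e0 : n - (n - 1) - 1 = 0 := by omega
      have hw1 : w (n - 1) = ((n - 1).factorial : ℝ) / n.factorial := by
        simp [hw, e0]
      rw [hw1, ← mul_div_assoc,
        div_eq_one_iff_eq (Nat.cast_ne_zero.mpr n.factorial_ne_zero), hmf]
    rw [hcomplempty, hcompluniv, hcards]
    simp only [Finset.card_empty, Nat.cast_zero, zero_mul, zero_sub, mul_zero]
    rw [← mul_assoc, ← mul_assoc, key1, key2]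
    ring
  · intro T hT hTne
    simp only [Finset.mem_insert, Finset.mem_singleton, not_or] at hTne
    obtain ⟨hT0, hTu⟩ := hTne
    have hk1 : 1 ≤ T.card := Finset.card_pos.mpr (Finset.nonempty_iff_ne_empty.mpr hT0)
    have hklt : T.card < n := by
      have := Finset.card_lt_card (Finset.ssubset_univ_iff.mpr hTu)
      simpa [Finset.card_univ] using this
    have hcompl : (Tᶜ).card = n - T.card := by
      simp [Finset.card_compl, Finset.card_univ, hn]
    rw [hcompl]
    have key : (T.card : ℝ) * w (T.card - 1) = ((n - T.card : ℕ) : ℝ) * w T.card := by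
      have e1 : n - (T.card - 1) - 1 = n - T.card := by omega
      have e2 : T.card * ((T.card - 1).factorial) = T.card.factorial :=
        Nat.mul_factorial_pred (Nat.pos_iff_ne_zero.mp hk1)
      have e3 : (n - T.card) * ((n - T.card - 1).factorial) = (n - T.card).factorial :=
        Nat.mul_factorial_pred (by omega)
      have hfac : T.card * ((T.card - 1).factorial * (n - T.card).factorial)
          = (n - T.card) * (T.card.factorial * (n - T.card - 1).factorial) := by
        calc T.card * ((T.card - 1).factorial * (n - T.card).factorial)
            = (T.card * (T.card - 1).factorial) * (n - T.card).factorial := by ring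
          _ = T.card.factorial * (n - T.card).factorial := by rw [e2]
          _ = T.card.factorial * ((n - T.card) * (n - T.card - 1).factorial) := by rw [e3]
          _ = (n - T.card) * (T.card.factorial * (n - T.card - 1).factorial) := by ring
      rw [hw]
      simp only [e1]
      calc (T.card : ℝ) * (((T.card - 1).factorial : ℝ) * ((n - T.card).factorial : ℝ)
              / (n.factorial : ℝ))
          = ((T.card * ((T.card - 1).factorial * (n - T.card).factorial) : ℕ) : ℝ)
              / (n.factorial : ℝ) := by push_cast; ring
        _ = (((n - T.card) * (T.card.factorial * (n - T.card - 1).factorial) : ℕ) : ℝ)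
              / (n.factorial : ℝ) := by rw [hfac]
        _ = ((n - T.card : ℕ) : ℝ) * (((T.card.factorial : ℝ) * ((n - T.card - 1).factorial : ℝ))
              / (n.factorial : ℝ)) := by push_cast; ring
    rw [← mul_assoc, ← mul_assoc, key]
    ring
end

section
/- The scaled difference of semivalues decomposes by coalition size: for distinct players i, j, n(φ(i; U, w) - φ(j; U, w)) = Σ_{k=1}^{n-1} (w(k) + w(k+1)) C(n-2, k-1) Δₖ^{i,j}(U), where Δₖ^{i,j}(U) = (1 / C(n-2, k-1)) Σ_{S ⊆ N∖{i,j}, |S| = k-1} (U(S ∪ {i}) - U(S ∪ {j})). -/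
open Finset

/-- The semivalue with weight function `w`. -/
noncomputable def semival {α : Type*} [Fintype α] [DecidableEq α]
    (w : ℕ → ℝ) (U : Finset α → ℝ) (i : α) : ℝ :=
  ∑ j ∈ Finset.Icc 1 (Fintype.card α), (w j / (Fintype.card α : ℝ)) *
    ∑ S ∈ (Finset.univ.erase i).powerset.filter (fun S => S.card = j - 1),
      (U (insert i S) - U S)

lemma split_sum {α : Type*} [DecidableEq α] (P : Finset α) (j : α) (hj : j ∉ P) (c : ℕ)
    (f : Finset α → ℝ) :
    ∑ S ∈ (insert j P).powerset.filter (fun S => S.card = c), f S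
    = (∑ S ∈ P.powerset.filter (fun S => S.card = c), f S)
      + ∑ S ∈ P.powerset.filter (fun S => S.card + 1 = c), f (insert j S) := by
  rw [sum_filter, sum_filter, sum_filter, sum_powerset_insert hj]
  congr 1
  refine sum_congr rfl fun S hS => ?_
  rw [mem_powerset] at hS
  have hjS : j ∉ S := fun h => hj (hS h)
  rw [card_insert_of_notMem hjS]

/-- The scaled difference of semivalues decomposes by coalition size:
`n(φ(i) - φ(j)) = Σ_{k=1}^{n-1} (w(k)+w(k+1)) Δₖ^{i,j}(U)` with the unnormalized
`Δₖ^{i,j}(U) = Σ_{S ⊆ N∖{i,j}, |S|=k-1} (U(S∪{i}) - U(S∪{j}))`. -/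
theorem semivalue_scaled_difference {α : Type*} [Fintype α] [DecidableEq α]
    (U : Finset α → ℝ) (w : ℕ → ℝ) (i j : α) (hij : i ≠ j) :
    (Fintype.card α : ℝ) * (semival w U i - semival w U j) =
      ∑ k ∈ Finset.Icc 1 (Fintype.card α - 1), (w k + w (k + 1)) *
        ∑ S ∈ ((Finset.univ.erase i).erase j).powerset.filter (fun S => S.card = k - 1),
          (U (insert i S) - U (insert j S)) := by
  classical
  set n := Fintype.card α with hn
  have hn2 : 2 ≤ n := Fintype.one_lt_card_iff_nontrivial.mpr ⟨i, j, hij⟩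
  have hnpos : (0:ℕ) < n := by omega
  have hnne : (n : ℝ) ≠ 0 := Nat.cast_ne_zero.mpr (by omega)
  set P : Finset α := (Finset.univ.erase i).erase j with hP
  have hjP : j ∉ P := notMem_erase _ _
  have hiP : i ∉ P := fun h => (mem_erase.mp (mem_of_mem_erase h)).1 rfl
  have hinsj : insert j P = Finset.univ.erase i :=
    insert_erase (mem_erase.mpr ⟨hij.symm, mem_univ j⟩)
  have hinsi : insert i P = Finset.univ.erase j := by
    rw [hP, Finset.erase_right_comm]
    exact insert_erase (mem_erase.mpr ⟨hij, mem_univ i⟩)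
  have hPcard : P.card = n - 2 := by
    rw [hP, card_erase_of_mem (mem_erase.mpr ⟨hij.symm, mem_univ j⟩),
      card_erase_of_mem (mem_univ i), card_univ, ← hn]
    omega
  set D : ℕ → ℝ := fun c =>
    ∑ S ∈ P.powerset.filter (fun S => S.card = c), (U (insert i S) - U (insert j S)) with hD
  set D2 : ℕ → ℝ := fun c =>
    ∑ S ∈ P.powerset.filter (fun S => S.card + 1 = c), (U (insert i S) - U (insert j S)) with hD2
  have hD2succ : ∀ c, D2 (c + 1) = D c := by
    intro c
    rw [hD, hD2]
    simp only [add_left_inj]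
  have hD2zero : D2 0 = 0 := by
    rw [hD2]
    simp only []
    rw [filter_false_of_mem (fun S _ => by omega), sum_empty]
  have hDbig : ∀ c, n - 2 < c → D c = 0 := by
    intro c hc
    rw [hD]
    simp only []
    rw [filter_false_of_mem, sum_empty]
    intro S hS hcard
    rw [mem_powerset] at hS
    have := card_le_card hS
    omega
  -- Step 1: rewrite LHS as a single sum
  have step1 : (n : ℝ) * (semival w U i - semival w U j)
      = ∑ m ∈ Finset.Icc 1 n, w m * (D (m - 1) + D2 (m - 1)) := by
    rw [semival, semival, ← hn, ← sum_sub_distrib, mul_sum]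
    refine sum_congr rfl fun m hm => ?_
    have hAB : (∑ S ∈ (Finset.univ.erase i).powerset.filter (fun S => S.card = m - 1),
          (U (insert i S) - U S))
        - (∑ S ∈ (Finset.univ.erase j).powerset.filter (fun S => S.card = m - 1),
          (U (insert j S) - U S))
        = D (m - 1) + D2 (m - 1) := by
      rw [← hinsj, ← hinsi, split_sum P j hjP, split_sum P i hiP, hD, hD2]
      simp only []
      have e1 : (∑ S ∈ P.powerset.filter (fun S => S.card = m-1), (U (insert i S) - U S))
          - ∑ S ∈ P.powerset.filter (fun S => S.card = m-1), (U (insert j S) - U S)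
          = ∑ S ∈ P.powerset.filter (fun S => S.card = m-1), (U (insert i S) - U (insert j S)) := by
        rw [← sum_sub_distrib]; exact sum_congr rfl fun S _ => by ring
      have e2 : (∑ S ∈ P.powerset.filter (fun S => S.card + 1 = m-1),
            (U (insert i (insert j S)) - U (insert j S)))
          - ∑ S ∈ P.powerset.filter (fun S => S.card + 1 = m-1),
            (U (insert j (insert i S)) - U (insert i S))
          = ∑ S ∈ P.powerset.filter (fun S => S.card + 1 = m-1),
            (U (insert i S) - U (insert j S)) := by
        rw [← sum_sub_distrib]
        exact sum_congr rfl fun S _ => by rw [Finset.insert_comm]; ring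
      linarith [e1, e2]
    rw [← hAB]
    field_simp
  rw [step1]
  -- Step 2: convert to range sums and reindex
  have hIcc : ∀ (N : ℕ) (f : ℕ → ℝ), ∑ m ∈ Finset.Icc 1 N, f m = ∑ t ∈ range N, f (1 + t) := by
    intro N f
    rw [← Finset.Ico_add_one_right_eq_Icc, Finset.sum_Ico_eq_sum_range]
    simp
  rw [hIcc, hIcc]
  have hsplit : ∑ t ∈ range n, w (1 + t) * (D (1 + t - 1) + D2 (1 + t - 1))
      = (∑ t ∈ range n, w (1 + t) * D t) + ∑ t ∈ range n, w (1 + t) * D2 t := by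
    rw [← sum_add_distrib]
    refine sum_congr rfl fun t _ => ?_
    have : 1 + t - 1 = t := by omega
    rw [this]
    ring
  rw [hsplit]
  obtain ⟨m, hm⟩ : ∃ m, n = m + 1 := ⟨n - 1, by omega⟩
  have hm1 : n - 1 = m := by omega
  rw [hm]
  simp only [Nat.add_sub_cancel]
  rw [sum_range_succ, sum_range_succ']
  have hfin1 : w (1 + m) * D m = 0 := by
    rw [hDbig m (by omega), mul_zero]
  have hfin2 : w (1 + 0) * D2 0 = 0 := by rw [hD2zero, mul_zero]
  rw [hfin1, hfin2, add_zero, add_zero]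
  rw [← sum_add_distrib]
  refine sum_congr rfl fun t _ => ?_
  rw [hD2succ]
  have : 1 + t - 1 = t := by omega
  rw [this]
  simp only [hD]
  ring
end
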